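/- Let $0 < p \le 1 \le p_1, p_2$ with $1/p = 1/p_1 + 1/p_2$, let $R > 0$, and let $T$ be a bilinear operator such that for every $y \in \mathbb{R}^n$ and all $f \in L^{p_1}$, $g \in L^{p_2}$, $\|T(f,g)\|_{L^p(B(y, R/5))} \le A \|f\|_{L^{p_1}(B(y,R))} \|g\|_{L^{p_2}(B(y,R))}$. Then $\|T(f,g)\|_{L^p(\mathbb{R}^n)} \le 5^{n/p} A \|f\|_{L^{p_1}(\mathbb{R}^n)} \|g\|_{L^{p_2}(\mathbb{R}^n)}$. -/

import Mathlib

open MeasureTheory Real ENNReal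
open scoped NNReal
set_option maxHeartbeats 1000000

noncomputable section

private lemma aux_swap_ge {α : Type*} [MeasurableSpace α] (μ ν : Measure α) [SFinite μ] [SFinite ν]
    (h : α → ℝ≥0∞) (k : α → α → ℝ≥0∞) (hk : Measurable (Function.uncurry k))
    (c : ℝ≥0∞) (hc : ∀ x, ∫⁻ y, k x y ∂ν = c) :
    c * ∫⁻ x, h x ∂μ ≤ ∫⁻ y, ∫⁻ x, h x * k x y ∂μ ∂ν := by
  rw [lintegral_eq_nnreal h μ, ENNReal.mul_iSup]
  refine iSup_le fun φ => ?_
  rw [ENNReal.mul_iSup]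
  refine iSup_le fun hφ => ?_
  have hφm : Measurable fun a => (φ a : ℝ≥0∞) := φ.measurable.coe_nnreal_ennreal
  have hswapm : AEMeasurable (Function.uncurry fun (y x : α) => (φ x : ℝ≥0∞) * k x y)
      (ν.prod μ) := by
    apply Measurable.aemeasurable
    apply Measurable.mul
    · exact hφm.comp measurable_snd
    · exact hk.comp measurable_swap
  have key : c * (φ.map ((↑) : ℝ≥0 → ℝ≥0∞)).lintegral μ
      = ∫⁻ y, ∫⁻ x, (φ x : ℝ≥0∞) * k x y ∂μ ∂ν := by
    rw [lintegral_lintegral_swap hswapm]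
    have : ∀ x, ∫⁻ y, (φ x : ℝ≥0∞) * k x y ∂ν = (φ x : ℝ≥0∞) * c := by
      intro x
      rw [lintegral_const_mul' _ _ ENNReal.coe_ne_top, hc]
    simp_rw [this]
    rw [lintegral_mul_const _ hφm, mul_comm]
    congr 1
    exact ((φ.map ((↑) : ℝ≥0 → ℝ≥0∞)).lintegral_eq_lintegral μ).symm.trans
      (lintegral_congr fun a => by simp)
  rw [key]
  refine lintegral_mono fun y => lintegral_mono fun x => ?_
  exact mul_le_mul_left (hφ x) _

private lemma aux_swap_eq {α : Type*} [MeasurableSpace α] (μ ν : Measure α) [SFinite μ] [SFinite ν]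
    (F : α → ℝ≥0∞) (hF : Measurable F) (hFtop : ∀ x, F x ≠ ∞)
    (k : α → α → ℝ≥0∞) (hk : Measurable (Function.uncurry k))
    (c : ℝ≥0∞) (hc : ∀ x, ∫⁻ y, k x y ∂ν = c) :
    ∫⁻ y, ∫⁻ x, F x * k x y ∂μ ∂ν = c * ∫⁻ x, F x ∂μ := by
  have hswapm : AEMeasurable (Function.uncurry fun (y x : α) => F x * k x y) (ν.prod μ) := by
    apply Measurable.aemeasurable
    exact (hF.comp measurable_snd).mul (hk.comp measurable_swap)
  rw [lintegral_lintegral_swap hswapm]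
  have : ∀ x, ∫⁻ y, F x * k x y ∂ν = F x * c := by
    intro x
    rw [lintegral_const_mul' _ _ (hFtop x), hc]
  simp_rw [this]
  rw [lintegral_mul_const _ hF, mul_comm]

section Main

variable {n : ℕ}

/-- The symmetric kernel `1_{dist x y ≤ r}`. -/
private def ker (r : ℝ) (x y : EuclideanSpace ℝ (Fin n)) : ℝ≥0∞ :=
  if dist x y ≤ r then 1 else 0

private lemma ker_meas (r : ℝ) :
    Measurable (Function.uncurry (ker (n := n) r)) := by
  have hs : MeasurableSet {z : EuclideanSpace ℝ (Fin n) × EuclideanSpace ℝ (Fin n) |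
      dist z.1 z.2 ≤ r} :=
    (isClosed_le (continuous_dist) continuous_const).measurableSet
  exact Measurable.ite hs measurable_const measurable_const

private lemma ker_lintegral (r : ℝ) (x : EuclideanSpace ℝ (Fin n)) :
    ∫⁻ y, ker r x y ∂volume = volume (Metric.closedBall (0 : EuclideanSpace ℝ (Fin n)) r) := by
  have h1 : ∀ y, ker r x y = (Metric.closedBall x r).indicator (fun _ => (1 : ℝ≥0∞)) y := by
    intro y
    by_cases hxy : dist x y ≤ r <;>
      simp [ker, Set.indicator_apply, Metric.mem_closedBall, dist_comm y x, hxy]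
  simp_rw [h1]
  rw [lintegral_indicator_const measurableSet_closedBall, one_mul,
    Measure.addHaar_closedBall_center]

private lemma ker_setLIntegral (r : ℝ) (h : EuclideanSpace ℝ (Fin n) → ℝ≥0∞)
    (y : EuclideanSpace ℝ (Fin n)) :
    ∫⁻ x in Metric.closedBall y r, h x ∂volume = ∫⁻ x, h x * ker r x y ∂volume := by
  rw [← lintegral_indicator measurableSet_closedBall]
  refine lintegral_congr fun x => ?_
  simp only [Set.indicator_apply, Metric.mem_closedBall, ker]
  by_cases hxy : dist x y ≤ r <;> simp [hxy]

end Main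

private abbrev EE (n : ℕ) := EuclideanSpace ℝ (Fin n)

/-- If a bilinear operator satisfies the uniform local estimate
`‖T(f,g)‖_{L^p(B(y,R/5))} ≤ A ‖f‖_{L^{p₁}(B(y,R))} ‖g‖_{L^{p₂}(B(y,R))}` for every `y`,
then `‖T(f,g)‖_{L^p(ℝⁿ)} ≤ 5^{n/p} A ‖f‖_{L^{p₁}} ‖g‖_{L^{p₂}}`. -/
theorem stmt9 (n : ℕ) (hn : 1 ≤ n) (p p₁ p₂ : ℝ)
    (hp0 : 0 < p) (hp1 : p ≤ 1) (hp₁ : 1 ≤ p₁) (hp₂ : 1 ≤ p₂)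
    (hp : 1 / p = 1 / p₁ + 1 / p₂)
    (R : ℝ) (hR : 0 < R) (A : ℝ) (hA : 0 ≤ A)
    (T : (EuclideanSpace ℝ (Fin n) → ℂ) → (EuclideanSpace ℝ (Fin n) → ℂ) →
        (EuclideanSpace ℝ (Fin n) → ℂ))
    (hloc : ∀ (y : EuclideanSpace ℝ (Fin n))
        (f g : EuclideanSpace ℝ (Fin n) → ℂ),
        MemLp f (ENNReal.ofReal p₁) volume → MemLp g (ENNReal.ofReal p₂) volume →
        eLpNorm (T f g) (ENNReal.ofReal p) (volume.restrict (Metric.closedBall y (R / 5)))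
          ≤ ENNReal.ofReal A *
              eLpNorm f (ENNReal.ofReal p₁) (volume.restrict (Metric.closedBall y R)) *
              eLpNorm g (ENNReal.ofReal p₂) (volume.restrict (Metric.closedBall y R)))
    (f g : EuclideanSpace ℝ (Fin n) → ℂ)
    (hf : MemLp f (ENNReal.ofReal p₁) volume)
    (hg : MemLp g (ENNReal.ofReal p₂) volume) :
    eLpNorm (T f g) (ENNReal.ofReal p) volume
      ≤ ENNReal.ofReal ((5 : ℝ) ^ ((n : ℝ) / p) * A) *
          eLpNorm f (ENNReal.ofReal p₁) volume * eLpNorm g (ENNReal.ofReal p₂) volume := by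
  have hp₁0 : 0 < p₁ := zero_lt_one.trans_le hp₁
  have hp₂0 : 0 < p₂ := zero_lt_one.trans_le hp₂
  have hqp0 : ENNReal.ofReal p ≠ 0 := by
    simp [ENNReal.ofReal_eq_zero, not_le, hp0]
  have hqp₁0 : ENNReal.ofReal p₁ ≠ 0 := by
    simp [ENNReal.ofReal_eq_zero, not_le, hp₁0]
  have hqp₂0 : ENNReal.ofReal p₂ ≠ 0 := by
    simp [ENNReal.ofReal_eq_zero, not_le, hp₂0]
  have htp : (ENNReal.ofReal p).toReal = p := ENNReal.toReal_ofReal hp0.le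
  have htp₁ : (ENNReal.ofReal p₁).toReal = p₁ := ENNReal.toReal_ofReal hp₁0.le
  have htp₂ : (ENNReal.ofReal p₂).toReal = p₂ := ENNReal.toReal_ofReal hp₂0.le
  -- measurable representatives
  set f' := hf.1.mk f with hf'def
  set g' := hg.1.mk g with hg'def
  have hf'm : Measurable f' := hf.1.stronglyMeasurable_mk.measurable
  have hg'm : Measurable g' := hg.1.stronglyMeasurable_mk.measurable
  have hff' : f =ᵐ[volume] f' := hf.1.ae_eq_mk
  have hgg' : g =ᵐ[volume] g' := hg.1.ae_eq_mk
  -- the integrands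
  set h : EE n → ℝ≥0∞ := fun x => (‖T f g x‖₊ : ℝ≥0∞) ^ p with hhdef
  set F : EE n → ℝ≥0∞ := fun x => (‖f' x‖₊ : ℝ≥0∞) ^ p₁ with hFdef
  set G : EE n → ℝ≥0∞ := fun x => (‖g' x‖₊ : ℝ≥0∞) ^ p₂ with hGdef
  have hFm : Measurable F := hf'm.nnnorm.coe_nnreal_ennreal.pow_const p₁
  have hGm : Measurable G := hg'm.nnnorm.coe_nnreal_ennreal.pow_const p₂
  set U : EE n → ℝ≥0∞ := fun y => ∫⁻ x, F x * ker R x y ∂volume with hUdef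
  set V : EE n → ℝ≥0∞ := fun y => ∫⁻ x, G x * ker R x y ∂volume with hVdef
  have hUm : Measurable U := by
    have : Measurable fun z : EE n × EE n => F z.1 * ker R z.1 z.2 :=
      (hFm.comp measurable_fst).mul (ker_meas R)
    exact this.lintegral_prod_left'
  have hVm : Measurable V := by
    have : Measurable fun z : EE n × EE n => G z.1 * ker R z.1 z.2 :=
      (hGm.comp measurable_fst).mul (ker_meas R)
    exact this.lintegral_prod_left'
  -- restricted norms of f, g expressed via U, V
  have hNf : ∀ y : EE n, eLpNorm f (ENNReal.ofReal p₁) (volume.restrict (Metric.closedBall y R))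
      = U y ^ (1 / p₁) := by
    intro y
    rw [eLpNorm_eq_lintegral_rpow_enorm_toReal hqp₁0 ENNReal.ofReal_ne_top, htp₁]
    congr 1
    have e : U y = ∫⁻ x in Metric.closedBall y R, F x ∂volume := (ker_setLIntegral R F y).symm
    rw [e]
    exact lintegral_congr_ae ((ae_restrict_of_ae (hff'.mono fun x hx => by
      simp only [hFdef, hx, enorm_eq_nnnorm])))
  have hNg : ∀ y : EE n, eLpNorm g (ENNReal.ofReal p₂) (volume.restrict (Metric.closedBall y R))
      = V y ^ (1 / p₂) := by
    intro y
    rw [eLpNorm_eq_lintegral_rpow_enorm_toReal hqp₂0 ENNReal.ofReal_ne_top, htp₂]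
    congr 1
    have e : V y = ∫⁻ x in Metric.closedBall y R, G x ∂volume := (ker_setLIntegral R G y).symm
    rw [e]
    exact lintegral_congr_ae ((ae_restrict_of_ae (hgg'.mono fun x hx => by
      simp only [hGdef, hx, enorm_eq_nnnorm])))
  -- main quantities
  set I : ℝ≥0∞ := ∫⁻ x, h x ∂volume with hIdef
  set C5 : ℝ≥0∞ := volume (Metric.closedBall (0 : EuclideanSpace ℝ (Fin n)) (R / 5)) with hC5def
  set CR : ℝ≥0∞ := volume (Metric.closedBall (0 : EuclideanSpace ℝ (Fin n)) R) with hCRdef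
  have hR5 : 0 < R / 5 := by positivity
  have hC5pos : C5 ≠ 0 := (Metric.measure_closedBall_pos volume _ hR5).ne'
  have hC5top : C5 ≠ ∞ := measure_closedBall_lt_top.ne
  have hCRpos : CR ≠ 0 := (Metric.measure_closedBall_pos volume _ hR).ne'
  have hCRtop : CR ≠ ∞ := measure_closedBall_lt_top.ne
  -- Step 1: lower bound for the double integral
  have step1 : C5 * I ≤ ∫⁻ y, ∫⁻ x, h x * ker (R / 5) x y ∂volume ∂volume :=
    aux_swap_ge volume volume h (ker (R / 5)) (ker_meas _) C5 (ker_lintegral (R / 5))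
  -- Step 2: local estimate, raised to the power p
  have step2 : ∀ y : EE n, ∫⁻ x, h x * ker (R / 5) x y ∂volume
      ≤ ENNReal.ofReal A ^ p * (U y ^ (p / p₁) * V y ^ (p / p₂)) := by
    intro y
    rw [← ker_setLIntegral (R / 5) h y]
    have hloc' := hloc y f g hf hg
    have e1 : eLpNorm (T f g) (ENNReal.ofReal p)
        (volume.restrict (Metric.closedBall y (R / 5)))
        = (∫⁻ x in Metric.closedBall y (R / 5), h x ∂volume) ^ (1 / p) := by
      rw [eLpNorm_eq_lintegral_rpow_enorm_toReal hqp0 ENNReal.ofReal_ne_top, htp]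
      rfl
    have e2 : ∫⁻ x in Metric.closedBall y (R / 5), h x ∂volume
        = (eLpNorm (T f g) (ENNReal.ofReal p)
            (volume.restrict (Metric.closedBall y (R / 5)))) ^ p := by
      rw [e1, ← ENNReal.rpow_mul, one_div, inv_mul_cancel₀ hp0.ne', ENNReal.rpow_one]
    rw [e2]
    calc (eLpNorm (T f g) (ENNReal.ofReal p)
            (volume.restrict (Metric.closedBall y (R / 5)))) ^ p
        ≤ (ENNReal.ofReal A *
            eLpNorm f (ENNReal.ofReal p₁) (volume.restrict (Metric.closedBall y R)) *
            eLpNorm g (ENNReal.ofReal p₂) (volume.restrict (Metric.closedBall y R))) ^ p :=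
          ENNReal.rpow_le_rpow hloc' hp0.le
      _ = ENNReal.ofReal A ^ p * (U y ^ (p / p₁) * V y ^ (p / p₂)) := by
          rw [hNf y, hNg y, ENNReal.mul_rpow_of_nonneg _ _ hp0.le,
            ENNReal.mul_rpow_of_nonneg _ _ hp0.le, ← ENNReal.rpow_mul, ← ENNReal.rpow_mul,
            mul_assoc]
          congr 2 <;> field_simp
  -- conjugate exponents
  have hpp₁ : p < p₁ := by
    have h1 : 1 / p₁ < 1 / p := by
      rw [hp]
      have : 0 < 1 / p₂ := by positivity
      linarith
    exact lt_of_one_div_lt_one_div hp₁0 h1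
  have hsum : p / p₁ + p / p₂ = 1 := by
    field_simp at hp ⊢
    nlinarith [hp]
  have hconj : (p₁ / p).HolderConjugate (p₂ / p) := by
    constructor
    · rw [inv_div, inv_div, inv_one]; exact hsum
    · positivity
    · positivity
  -- Step 3: Hölder
  have step3 : ∫⁻ y, U y ^ (p / p₁) * V y ^ (p / p₂) ∂volume
      ≤ (∫⁻ y, U y ∂volume) ^ (p / p₁) * (∫⁻ y, V y ∂volume) ^ (p / p₂) := by
    have := ENNReal.lintegral_mul_le_Lp_mul_Lq volume hconj
      (hUm.pow_const (p / p₁)).aemeasurable (hVm.pow_const (p / p₂)).aemeasurable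
    simp only [Pi.mul_apply] at this
    have e1 : ∀ y : EE n, (U y ^ (p / p₁)) ^ (p₁ / p) = U y := by
      intro y
      rw [← ENNReal.rpow_mul, div_mul_div_comm, mul_comm,
        div_self (by positivity : p₁ * p ≠ 0), ENNReal.rpow_one]
    have e2 : ∀ y : EE n, (V y ^ (p / p₂)) ^ (p₂ / p) = V y := by
      intro y
      rw [← ENNReal.rpow_mul, div_mul_div_comm, mul_comm,
        div_self (by positivity : p₂ * p ≠ 0), ENNReal.rpow_one]
    simp_rw [e1, e2, one_div_div] at this
    exact this
  -- Step 4: Fubini for U and V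
  have hFtop : ∀ x, F x ≠ ∞ := fun x =>
    ENNReal.rpow_ne_top_of_nonneg hp₁0.le ENNReal.coe_ne_top
  have hGtop : ∀ x, G x ≠ ∞ := fun x =>
    ENNReal.rpow_ne_top_of_nonneg hp₂0.le ENNReal.coe_ne_top
  have step4U : ∫⁻ y, U y ∂volume = CR * ∫⁻ x, F x ∂volume :=
    aux_swap_eq volume volume F hFm hFtop (ker R) (ker_meas R) CR (ker_lintegral R)
  have step4V : ∫⁻ y, V y ∂volume = CR * ∫⁻ x, G x ∂volume :=
    aux_swap_eq volume volume G hGm hGtop (ker R) (ker_meas R) CR (ker_lintegral R)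
  -- combine
  set If : ℝ≥0∞ := ∫⁻ x, F x ∂volume with hIfdef
  set Ig : ℝ≥0∞ := ∫⁻ x, G x ∂volume with hIgdef
  have main : C5 * I ≤ CR * (ENNReal.ofReal A ^ p * (If ^ (p / p₁) * Ig ^ (p / p₂))) := by
    calc C5 * I ≤ ∫⁻ y, ∫⁻ x, h x * ker (R / 5) x y ∂volume ∂volume := step1
      _ ≤ ∫⁻ y, ENNReal.ofReal A ^ p * (U y ^ (p / p₁) * V y ^ (p / p₂)) ∂volume :=
          lintegral_mono step2
      _ = ENNReal.ofReal A ^ p * ∫⁻ y, U y ^ (p / p₁) * V y ^ (p / p₂) ∂volume :=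
          lintegral_const_mul' _ _ (by
            exact ENNReal.rpow_ne_top_of_nonneg hp0.le ENNReal.ofReal_ne_top)
      _ ≤ ENNReal.ofReal A ^ p *
            ((∫⁻ y, U y ∂volume) ^ (p / p₁) * (∫⁻ y, V y ∂volume) ^ (p / p₂)) :=
          mul_le_mul_right step3 _
      _ = ENNReal.ofReal A ^ p * ((CR * If) ^ (p / p₁) * (CR * Ig) ^ (p / p₂)) := by
          rw [step4U, step4V]
      _ = CR * (ENNReal.ofReal A ^ p * (If ^ (p / p₁) * Ig ^ (p / p₂))) := by
          rw [ENNReal.mul_rpow_of_nonneg _ _ (by positivity : (0:ℝ) ≤ p / p₁),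
            ENNReal.mul_rpow_of_nonneg _ _ (by positivity : (0:ℝ) ≤ p / p₂)]
          rw [show CR ^ (p / p₁) * If ^ (p / p₁) * (CR ^ (p / p₂) * Ig ^ (p / p₂))
              = (CR ^ (p / p₁) * CR ^ (p / p₂)) * (If ^ (p / p₁) * Ig ^ (p / p₂)) by ring]
          rw [← ENNReal.rpow_add _ _ hCRpos hCRtop, hsum, ENNReal.rpow_one]
          ring
  -- scaling: CR = 5^n * C5
  have hCR5 : CR = ENNReal.ofReal ((5 : ℝ) ^ n) * C5 := by
    rw [hCRdef, hC5def, Measure.addHaar_closedBall _ _ hR.le,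
      Measure.addHaar_closedBall _ _ hR5.le, finrank_euclideanSpace_fin,
      ← mul_assoc, ← ENNReal.ofReal_mul (by positivity)]
    congr 2
    rw [← mul_pow]
    congr 1
    ring
  have hI : I ≤ ENNReal.ofReal ((5 : ℝ) ^ n) *
      (ENNReal.ofReal A ^ p * (If ^ (p / p₁) * Ig ^ (p / p₂))) := by
    rw [← ENNReal.mul_le_mul_iff_right hC5pos hC5top]
    calc C5 * I ≤ CR * (ENNReal.ofReal A ^ p * (If ^ (p / p₁) * Ig ^ (p / p₂))) := main
      _ = C5 * (ENNReal.ofReal ((5 : ℝ) ^ n) *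
          (ENNReal.ofReal A ^ p * (If ^ (p / p₁) * Ig ^ (p / p₂)))) := by
          rw [hCR5]; ring
  -- take the 1/p power
  have hTnorm : eLpNorm (T f g) (ENNReal.ofReal p) volume = I ^ (1 / p) := by
    rw [eLpNorm_eq_lintegral_rpow_enorm_toReal hqp0 ENNReal.ofReal_ne_top, htp]
    rfl
  have hfnorm : eLpNorm f (ENNReal.ofReal p₁) volume = If ^ (1 / p₁) := by
    rw [eLpNorm_eq_lintegral_rpow_enorm_toReal hqp₁0 ENNReal.ofReal_ne_top, htp₁]
    congr 1
    exact lintegral_congr_ae (hff'.mono fun x hx => by simp only [hFdef, hx, enorm_eq_nnnorm])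
  have hgnorm : eLpNorm g (ENNReal.ofReal p₂) volume = Ig ^ (1 / p₂) := by
    rw [eLpNorm_eq_lintegral_rpow_enorm_toReal hqp₂0 ENNReal.ofReal_ne_top, htp₂]
    congr 1
    exact lintegral_congr_ae (hgg'.mono fun x hx => by simp only [hGdef, hx, enorm_eq_nnnorm])
  rw [hTnorm, hfnorm, hgnorm]
  calc I ^ (1 / p)
      ≤ (ENNReal.ofReal ((5 : ℝ) ^ n) *
          (ENNReal.ofReal A ^ p * (If ^ (p / p₁) * Ig ^ (p / p₂)))) ^ (1 / p) :=
        ENNReal.rpow_le_rpow hI (by positivity)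
    _ = ENNReal.ofReal ((5 : ℝ) ^ ((n : ℝ) / p) * A) * If ^ (1 / p₁) * Ig ^ (1 / p₂) := by
        have h1p : (0:ℝ) ≤ 1 / p := by positivity
        rw [ENNReal.mul_rpow_of_nonneg _ _ h1p, ENNReal.mul_rpow_of_nonneg _ _ h1p,
          ENNReal.mul_rpow_of_nonneg _ _ h1p,
          ← ENNReal.rpow_mul (ENNReal.ofReal A), ← ENNReal.rpow_mul If, ← ENNReal.rpow_mul Ig]
        have ea : p * (1 / p) = 1 := by field_simp
        have eb : p / p₁ * (1 / p) = 1 / p₁ := by field_simp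
        have ec : p / p₂ * (1 / p) = 1 / p₂ := by field_simp
        rw [ea, eb, ec, ENNReal.rpow_one]
        have e5 : (ENNReal.ofReal ((5 : ℝ) ^ n)) ^ (1 / p)
            = ENNReal.ofReal ((5 : ℝ) ^ ((n : ℝ) / p)) := by
          rw [ENNReal.ofReal_rpow_of_pos (by positivity : (0:ℝ) < 5 ^ n)]
          congr 1
          rw [← Real.rpow_natCast (5 : ℝ) n, ← Real.rpow_mul (by norm_num : (0:ℝ) ≤ 5)]
          congr 1
          ring
        rw [e5, ENNReal.ofReal_mul (by positivity)]
        ring
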